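/- Let M and N be model categories with pushouts, let n ≥ 0, and equip Fun([n], M) and Fun([n], N) with the model structures in which weak equivalences and fibrations are componentwise (the projective model structures). If F : M ⇄ N : G is a Quillen adjunction, then the induced adjunction (F ∘ −) : Fun([n], M) ⇄ Fun([n], N) : (G ∘ −) given by postcomposition (whiskering) is a Quillen adjunction; and if F ⊣ G is moreover a Quillen equivalence, then the induced adjunction is a Quillen equivalence. -/

import Mathlib

open CategoryTheory Limits

universe w v u

namespace Paper

/-- `f` is a retract of `g` in the arrow category. -/
def IsRetract {M : Type u} [Category.{v} M] {a b x y : M} (f : a ⟶ b) (g : x ⟶ y) : Prop :=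
  ∃ (i : a ⟶ x) (r : x ⟶ a) (i' : b ⟶ y) (r' : y ⟶ b),
    i ≫ r = 𝟙 a ∧ i' ≫ r' = 𝟙 b ∧ i ≫ g = f ≫ i' ∧ g ≫ r' = r ≫ f

/-- A (Quillen) model structure on a category `M`: classes of weak equivalences,
cofibrations and fibrations, containing all isomorphisms, with the two-out-of-three
property for weak equivalences, all three classes closed under retracts, the lifting
axioms, and the two factorization axioms. -/
structure ModelStructure (M : Type u) [Category.{v} M] where
  W : MorphismProperty M
  Cof : MorphismProperty M
  Fib : MorphismProperty M
  iso_W : MorphismProperty.isomorphisms M ≤ W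
  iso_Cof : MorphismProperty.isomorphisms M ≤ Cof
  iso_Fib : MorphismProperty.isomorphisms M ≤ Fib
  two_of_three : W.HasTwoOutOfThreeProperty
  retract_W : ∀ {a b x y : M} (f : a ⟶ b) (g : x ⟶ y), IsRetract f g → W g → W f
  retract_Cof : ∀ {a b x y : M} (f : a ⟶ b) (g : x ⟶ y), IsRetract f g → Cof g → Cof f
  retract_Fib : ∀ {a b x y : M} (f : a ⟶ b) (g : x ⟶ y), IsRetract f g → Fib g → Fib f
  lift_Cof_trivFib : ∀ {a b x y : M} (i : a ⟶ b) (p : x ⟶ y),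
    Cof i → W p → Fib p → HasLiftingProperty i p
  lift_trivCof_Fib : ∀ {a b x y : M} (i : a ⟶ b) (p : x ⟶ y),
    Cof i → W i → Fib p → HasLiftingProperty i p
  fact_Cof_trivFib : ∀ {x y : M} (f : x ⟶ y),
    ∃ (z : M) (i : x ⟶ z) (p : z ⟶ y), Cof i ∧ W p ∧ Fib p ∧ i ≫ p = f
  fact_trivCof_Fib : ∀ {x y : M} (f : x ⟶ y),
    ∃ (z : M) (i : x ⟶ z) (p : z ⟶ y), Cof i ∧ W i ∧ Fib p ∧ i ≫ p = f

variable {M : Type u} [Category.{v} M]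

/-- An object is cofibrant if the map from the initial object to it is a cofibration. -/
def ModelStructure.Cofibrant [HasInitial M] (S : ModelStructure M) (x : M) : Prop :=
  S.Cof (initial.to x)

/-- An object is fibrant if the map from it to the terminal object is a fibration. -/
def ModelStructure.Fibrant [HasTerminal M] (S : ModelStructure M) (x : M) : Prop :=
  S.Fib (terminal.from x)

end Paper

namespace Paper

variable {M : Type u} [Category.{v} M] [HasPushouts M]

/-- For a natural transformation `f : X ⟶ Y` of functors `[n] ⥤ M` and `i : Fin n`, the
corner map `X_{i+1} ⊔_{X_i} Y_i ⟶ Y_{i+1}` induced by the naturality square of `f` at the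
map `i → i+1`. -/
noncomputable def cornerMap {n : ℕ} {X Y : Fin (n + 1) ⥤ M} (f : X ⟶ Y) (i : Fin n) :
    pushout (X.map (homOfLE (Fin.castSucc_lt_succ (i := i)).le)) (f.app i.castSucc) ⟶
      Y.obj i.succ :=
  pushout.desc (f.app i.succ) (Y.map (homOfLE (Fin.castSucc_lt_succ (i := i)).le))
    (f.naturality (homOfLE (Fin.castSucc_lt_succ (i := i)).le))

end Paper


open CategoryTheory Limits



namespace PaperAux

variable {M : Type*} [Category M]

lemma isRetract_iso_comp {a x y : M} (e : a ⟶ x) [IsIso e] (f : x ⟶ y) :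
    Paper.IsRetract (e ≫ f) f :=
  ⟨e, inv e, 𝟙 y, 𝟙 y, by simp, by simp, by simp, by simp⟩

lemma isRetract_comp_iso {x y z : M} (f : x ⟶ y) (e : y ⟶ z) [IsIso e] :
    Paper.IsRetract (f ≫ e) f :=
  ⟨𝟙 x, 𝟙 x, inv e, e, by simp, by simp, by simp, by simp⟩

lemma cof_iff_llp (S : Paper.ModelStructure M) {a b : M} (f : a ⟶ b) :
    S.Cof f ↔ ∀ ⦃x y : M⦄ (p : x ⟶ y), S.W p → S.Fib p → HasLiftingProperty f p := by
  constructor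
  · intro h x y p hw hp
    exact S.lift_Cof_trivFib f p h hw hp
  · intro h
    obtain ⟨z, i, p, hi, hw, hp, hfac⟩ := S.fact_Cof_trivFib f
    haveI := h p hw hp
    have sq : CommSq i f p (𝟙 b) := ⟨by simp [hfac]⟩
    exact S.retract_Cof f i
      ⟨𝟙 a, 𝟙 a, sq.lift, p, by simp, sq.fac_right, by simp [sq.fac_left], by simp [hfac]⟩ hi

lemma trivCof_iff_llp (S : Paper.ModelStructure M) {a b : M} (f : a ⟶ b) :
    (S.Cof f ∧ S.W f) ↔ ∀ ⦃x y : M⦄ (p : x ⟶ y), S.Fib p → HasLiftingProperty f p := by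
  constructor
  · intro h x y p hp
    exact S.lift_trivCof_Fib f p h.1 h.2 hp
  · intro h
    obtain ⟨z, i, p, hi, hw, hp, hfac⟩ := S.fact_trivCof_Fib f
    haveI := h p hp
    have sq : CommSq i f p (𝟙 b) := ⟨by simp [hfac]⟩
    have hr : Paper.IsRetract f i :=
      ⟨𝟙 a, 𝟙 a, sq.lift, p, by simp, sq.fac_right, by simp [sq.fac_left], by simp [hfac]⟩
    exact ⟨S.retract_Cof f i hr hi, S.retract_W f i hr hw⟩

lemma hlp_pushout_inl [HasPushouts M] {a b c x y : M} (f : a ⟶ b) (g : a ⟶ c) (p : x ⟶ y)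
    [HasLiftingProperty g p] : HasLiftingProperty (pushout.inl f g) p := by
  constructor
  intro u v sq
  have sq' : CommSq (f ≫ u) g p (pushout.inr f g ≫ v) :=
    ⟨by rw [Category.assoc, sq.w, ← Category.assoc, pushout.condition, Category.assoc]⟩
  refine CommSq.HasLift.mk' ⟨pushout.desc u sq'.lift (by rw [sq'.fac_left]), pushout.inl_desc _ _ _, ?_⟩
  apply pushout.hom_ext
  · rw [pushout.inl_desc_assoc, sq.w]
  · rw [pushout.inr_desc_assoc, sq'.fac_right]

end PaperAux

namespace PaperAux

open Paper

variable {M : Type*} [Category M] [HasPushouts M]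

lemma pushout_inl_trivCof (S : ModelStructure M) {a b c : M} (f : a ⟶ b) (g : a ⟶ c)
    (h : S.Cof g ∧ S.W g) : S.Cof (pushout.inl f g) ∧ S.W (pushout.inl f g) := by
  rw [trivCof_iff_llp]
  intro x y p hp
  haveI := (trivCof_iff_llp S g).1 h p hp
  exact hlp_pushout_inl f g p

lemma app_cof (S : ModelStructure M) {n : ℕ}
    {X Y : Fin (n + 1) ⥤ M} (f : X ⟶ Y)
    (hf : S.Cof (f.app 0) ∧ ∀ i : Fin n, S.Cof (cornerMap f i)) :
    ∀ i, S.Cof (f.app i) := by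
  intro i
  induction i using Fin.induction with
  | zero => exact hf.1
  | succ i ih =>
    have heq : f.app i.succ = pushout.inl _ _ ≫ cornerMap f i := by
      exact (pushout.inl_desc _ _ _).symm
    rw [heq, cof_iff_llp]
    intro x y p hw hp
    haveI := (cof_iff_llp S _).1 ih p hw hp
    haveI := hlp_pushout_inl (X.map (homOfLE (Fin.castSucc_lt_succ (i := i)).le)) (f.app i.castSucc) p
    haveI := (cof_iff_llp S _).1 (hf.2 i) p hw hp
    infer_instance

lemma corner_W (S : ModelStructure M) {n : ℕ}
    {X Y : Fin (n + 1) ⥤ M} (f : X ⟶ Y)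
    (hf : S.Cof (f.app 0) ∧ ∀ i : Fin n, S.Cof (cornerMap f i))
    (hw : ∀ i, S.W (f.app i)) (i : Fin n) : S.W (cornerMap f i) := by
  have hcs : S.Cof (f.app i.castSucc) := app_cof S f hf i.castSucc
  have hinl := pushout_inl_trivCof S
    (X.map (homOfLE (Fin.castSucc_lt_succ (i := i)).le)) (f.app i.castSucc) ⟨hcs, hw i.castSucc⟩
  have heq : f.app i.succ = pushout.inl _ _ ≫ cornerMap f i := by
    exact (pushout.inl_desc _ _ _).symm
  have hcomp : S.W (pushout.inl _ _ ≫ cornerMap f i) := heq ▸ hw i.succ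
  exact S.two_of_three.toHasOfPrecompProperty.of_precomp _ _ hinl.2 hcomp

end PaperAux

section Statement10

open Paper

/-- Let `F ⊣ G` be a Quillen adjunction between model categories `M`, `N`
with pushouts, and equip `Fun([n], M)` and `Fun([n], N)` with the projective model
structures (componentwise weak equivalences and fibrations, cofibrations characterized by
corner maps).  Then the adjunction induced by postcomposition (whiskering) is a Quillen
adjunction; and if `F ⊣ G` is a Quillen equivalence then so is the induced adjunction. -/
theorem projective_model_structure_quillen_adjunction_whiskering
    {M : Type u} {N : Type u'} [Category.{v} M] [Category.{v'} N]
    [HasPushouts M] [HasPushouts N] [HasInitial M] [HasTerminal N]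
    (SM : ModelStructure M) (SN : ModelStructure N) (n : ℕ)
    (TM : ModelStructure (Fin (n + 1) ⥤ M)) (TN : ModelStructure (Fin (n + 1) ⥤ N))
    (hTMW : ∀ {X Y : Fin (n + 1) ⥤ M} (f : X ⟶ Y), TM.W f ↔ ∀ i, SM.W (f.app i))
    (hTMFib : ∀ {X Y : Fin (n + 1) ⥤ M} (f : X ⟶ Y), TM.Fib f ↔ ∀ i, SM.Fib (f.app i))
    (hTMCof : ∀ {X Y : Fin (n + 1) ⥤ M} (f : X ⟶ Y), TM.Cof f ↔
      (SM.Cof (f.app 0) ∧ ∀ i : Fin n, SM.Cof (cornerMap f i)))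
    (hTNW : ∀ {X Y : Fin (n + 1) ⥤ N} (f : X ⟶ Y), TN.W f ↔ ∀ i, SN.W (f.app i))
    (hTNFib : ∀ {X Y : Fin (n + 1) ⥤ N} (f : X ⟶ Y), TN.Fib f ↔ ∀ i, SN.Fib (f.app i))
    (hTNCof : ∀ {X Y : Fin (n + 1) ⥤ N} (f : X ⟶ Y), TN.Cof f ↔
      (SN.Cof (f.app 0) ∧ ∀ i : Fin n, SN.Cof (cornerMap f i)))
    (F : M ⥤ N) (G : N ⥤ M) (adj : F ⊣ G)
    (hF_cof : ∀ {a b : M} (f : a ⟶ b), SM.Cof f → SN.Cof (F.map f))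
    (hF_trivCof : ∀ {a b : M} (f : a ⟶ b), SM.Cof f → SM.W f →
      SN.Cof (F.map f) ∧ SN.W (F.map f)) :
    (∀ {X Y : Fin (n + 1) ⥤ M} (f : X ⟶ Y), TM.Cof f →
      TN.Cof (((Functor.whiskeringRight (Fin (n + 1)) M N).obj F).map f)) ∧
    (∀ {X Y : Fin (n + 1) ⥤ M} (f : X ⟶ Y), TM.Cof f → TM.W f →
      TN.Cof (((Functor.whiskeringRight (Fin (n + 1)) M N).obj F).map f) ∧
      TN.W (((Functor.whiskeringRight (Fin (n + 1)) M N).obj F).map f)) ∧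
    ((∀ (x : M) (y : N), SM.Cofibrant x → SN.Fibrant y →
        ∀ f : F.obj x ⟶ y, SN.W f ↔ SM.W (adj.homEquiv x y f)) →
      (∀ (X : Fin (n + 1) ⥤ M) (Y : Fin (n + 1) ⥤ N),
        TM.Cofibrant X → TN.Fibrant Y →
        ∀ g : ((Functor.whiskeringRight (Fin (n + 1)) M N).obj F).obj X ⟶ Y,
          TN.W g ↔ TM.W (((adj.whiskerRight (Fin (n + 1))).homEquiv X Y) g))) := by
  haveI := adj.leftAdjoint_preservesColimits
  -- corner maps of whiskered morphisms
  have hcorner_eq : ∀ {X Y : Fin (n + 1) ⥤ M} (f : X ⟶ Y) (i : Fin n),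
      cornerMap (((Functor.whiskeringRight (Fin (n + 1)) M N).obj F).map f) i =
        pushoutComparison F (X.map (homOfLE (Fin.castSucc_lt_succ (i := i)).le)) (f.app i.castSucc) ≫
          F.map (cornerMap f i) := by
    intro X Y f i
    apply pushout.hom_ext
    · simp [cornerMap]
    · simp [cornerMap]
  have hCofmap : ∀ {X Y : Fin (n + 1) ⥤ M} (f : X ⟶ Y), TM.Cof f →
      TN.Cof (((Functor.whiskeringRight (Fin (n + 1)) M N).obj F).map f) := by
    intro X Y f hf
    rw [hTMCof] at hf
    rw [hTNCof]
    refine ⟨hF_cof (f.app 0) hf.1, fun i => ?_⟩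
    rw [hcorner_eq]
    exact SN.retract_Cof _ _ (PaperAux.isRetract_iso_comp _ _) (hF_cof _ (hf.2 i))
  refine ⟨hCofmap, ?_, ?_⟩
  · intro X Y f hf hw
    have hf' := (hTMCof f).1 hf
    have hw' := (hTMW f).1 hw
    have happ : ∀ i, SM.Cof (f.app i) := PaperAux.app_cof SM f hf'
    constructor
    · rw [hTNCof]
      refine ⟨(hF_trivCof (f.app 0) hf'.1 (hw' 0)).1, fun i => ?_⟩
      rw [hcorner_eq]
      exact SN.retract_Cof _ _ (PaperAux.isRetract_iso_comp _ _)
        (hF_trivCof _ (hf'.2 i) (PaperAux.corner_W SM f hf' hw' i)).1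
    · rw [hTNW]
      intro i
      exact (hF_trivCof (f.app i) (happ i) (hw' i)).2
  · intro hQ X Y hX hY g
    have hXi : ∀ i, SM.Cofibrant (X.obj i) := by
      intro i
      have h1 : SM.Cof ((initial.to X).app i) :=
        PaperAux.app_cof SM (initial.to X) ((hTMCof _).1 hX) i
      have hinit : IsInitial ((⊥_ (Fin (n + 1) ⥤ M)).obj i) :=
        initialIsInitial.isInitialObj ((evaluation (Fin (n + 1)) M).obj i) _
      have e := initialIsInitial.uniqueUpToIso hinit
      have heq : initial.to (X.obj i) = e.hom ≫ (initial.to X).app i :=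
        initial.hom_ext _ _
      rw [ModelStructure.Cofibrant, heq]
      exact SM.retract_Cof _ _ (PaperAux.isRetract_iso_comp _ _) h1
    have hYi : ∀ i, SN.Fibrant (Y.obj i) := by
      intro i
      have h1 : SN.Fib ((terminal.from Y).app i) := (hTNFib _).1 hY i
      have hterm : IsTerminal ((⊤_ (Fin (n + 1) ⥤ N)).obj i) :=
        terminalIsTerminal.isTerminalObj ((evaluation (Fin (n + 1)) N).obj i) _
      have e := hterm.uniqueUpToIso terminalIsTerminal
      have heq : terminal.from (Y.obj i) = (terminal.from Y).app i ≫ e.hom :=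
        terminal.hom_ext _ _
      rw [ModelStructure.Fibrant, heq]
      exact SN.retract_Fib _ _ (PaperAux.isRetract_comp_iso _ _) h1
    rw [hTNW, hTMW]
    refine forall_congr' fun i => ?_
    have happ : (((adj.whiskerRight (Fin (n + 1))).homEquiv X Y) g).app i =
        adj.homEquiv (X.obj i) (Y.obj i) (g.app i) := by
      rw [Adjunction.homEquiv_unit]
      simp
      exact (adj.homEquiv_unit _ _ _).symm
    rw [happ]
    exact hQ (X.obj i) (Y.obj i) (hXi i) (hYi i) (g.app i)


end Statement10
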